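/- Let d_X be the explicit metric on X = (0,1] × ℝ and f(x₁,x₂) = x₁·exp(πi x₂). For b, b' ∈ ℂ with 0 < |b| ≤ 1 and 0 < |b'| ≤ 1, the infimum inf{ d_X(x, x') : x ∈ f⁻¹(b), x' ∈ f⁻¹(b') } tends to |b'|/2 as b → 0 (with b' fixed). -/

import Mathlib

noncomputable def dXaux (x x' : ℝ × ℝ) : ℝ :=
  if x.1 - x'.1 ≤ x.1 / 2 ∧ |x.2 - x'.2| ≤ x.1 / 2 then
    max (x.1 - x'.1) |x.2 - x'.2|
  else x.1 / 2

/-- The explicit semialgebraic metric on `X = (0,1] × ℝ` from the proof of Theorem 2. -/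
noncomputable def dX (x x' : ℝ × ℝ) : ℝ :=
  if x'.1 ≤ x.1 then dXaux x x' else dXaux x' x

def memX (x : ℝ × ℝ) : Prop := 0 < x.1 ∧ x.1 ≤ 1


open Filter

noncomputable def fmap (x : ℝ × ℝ) : ℂ :=
  (x.1 : ℂ) * Complex.exp (Real.pi * Complex.I * (x.2 : ℂ))

lemma fmap_fst {x : ℝ × ℝ} {b : ℂ} (hx : 0 < x.1) (h : fmap x = b) :
    x.1 = ‖b‖ := by
  have habs : ‖fmap x‖ = x.1 := by
    simp [fmap, Complex.norm_exp, Complex.mul_re, abs_of_pos hx]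
  rw [h] at habs
  exact habs.symm

lemma fmap_exists {b : ℂ} (hb : 0 < ‖b‖) (hb1 : ‖b‖ ≤ 1) :
    ∃ x : ℝ × ℝ, memX x ∧ fmap x = b ∧ x.1 = ‖b‖ := by
  refine ⟨(‖b‖, Complex.arg b / Real.pi), ⟨hb, hb1⟩, ?_, rfl⟩
  have hπ : (Real.pi : ℂ) ≠ 0 := by exact_mod_cast Real.pi_ne_zero
  show ((‖b‖ : ℝ) : ℂ) * Complex.exp (Real.pi * Complex.I *
      ((Complex.arg b / Real.pi : ℝ) : ℂ)) = b
  have harg : (Real.pi : ℂ) * Complex.I * ((Complex.arg b / Real.pi : ℝ) : ℂ)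
      = (Complex.arg b : ℂ) * Complex.I := by
    push_cast
    field_simp
  rw [harg, Complex.norm_mul_exp_arg_mul_I]

lemma dX_far {x x' : ℝ × ℝ} (hx : 0 < x.1) (h : x.1 < x'.1 / 2) :
    dX x x' = x'.1 / 2 := by
  unfold dX dXaux
  rw [if_neg (by push_neg; linarith), if_neg (by rintro ⟨h1, -⟩; linarith)]

theorem fiber_distance_tends_to_half_norm
    (b' : ℂ) (hb'0 : 0 < ‖b'‖) (hb'1 : ‖b'‖ ≤ 1) :
    Tendsto
      (fun b : ℂ => sInf {r : ℝ | ∃ x x' : ℝ × ℝ,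
        memX x ∧ memX x' ∧ fmap x = b ∧ fmap x' = b' ∧ r = dX x x'})
      (nhdsWithin 0 {b : ℂ | 0 < ‖b‖ ∧ ‖b‖ ≤ 1})
      (nhds (‖b'‖ / 2)) := by
  have h1 : ∀ᶠ b : ℂ in nhds 0, ‖b‖ < ‖b'‖ / 2 := by
    have hc : Tendsto (fun b : ℂ => ‖b‖) (nhds 0) (nhds 0) := by
      have := (continuous_norm (E := ℂ)).tendsto 0
      rwa [norm_zero] at this
    exact hc.eventually_lt_const (by positivity)
  have hev : ∀ᶠ b in nhdsWithin 0 {b : ℂ | 0 < ‖b‖ ∧ ‖b‖ ≤ 1},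
      sInf {r : ℝ | ∃ x x' : ℝ × ℝ,
        memX x ∧ memX x' ∧ fmap x = b ∧ fmap x' = b' ∧ r = dX x x'}
      = ‖b'‖ / 2 := by
    filter_upwards [h1.filter_mono nhdsWithin_le_nhds, self_mem_nhdsWithin]
      with b hb hbS
    obtain ⟨hb0, hb1⟩ := hbS
    have hset : {r : ℝ | ∃ x x' : ℝ × ℝ,
        memX x ∧ memX x' ∧ fmap x = b ∧ fmap x' = b' ∧ r = dX x x'}
        = {‖b'‖ / 2} := by
      ext r
      simp only [Set.mem_setOf_eq, Set.mem_singleton_iff]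
      constructor
      · rintro ⟨x, x', hx, hx', hfx, hfx', rfl⟩
        have e1 : x.1 = ‖b‖ := fmap_fst hx.1 hfx
        have e2 : x'.1 = ‖b'‖ := fmap_fst hx'.1 hfx'
        rw [dX_far hx.1 (by rw [e1, e2]; exact hb), e2]
      · rintro rfl
        obtain ⟨x, hx, hfx, hx1⟩ := fmap_exists hb0 hb1
        obtain ⟨x', hx', hfx', hx'1⟩ := fmap_exists hb'0 hb'1
        exact ⟨x, x', hx, hx', hfx, hfx',
          by rw [dX_far hx.1 (by rw [hx1, hx'1]; exact hb), hx'1]⟩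
    rw [hset, csInf_singleton]
  exact tendsto_const_nhds.congr' (hev.mono fun b h => h.symm)
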